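/- Let m, M > 0 with m ≤ M, let γ ≥ m + M, and consider two solutions (L_t, V_t) and (L'_t, V'_t) of the kinetic Langevin SDE dL = V dt, dV = −γV dt − γ∇f(L) dt + √2 γ dW driven by the same Brownian motion, where f is twice differentiable with m·I ≼ ∇²f ≼ M·I. Define Z_t = V_t − V'_t and Y_t = V_t − V'_t + γ(L_t − L'_t). Then (d/dt)(‖Y_t‖² + ‖Z_t‖²) ≤ −2 min(m, γ−M) (‖Y_t‖² + ‖Z_t‖²), and consequently (‖Y_t‖² + ‖Z_t‖²)^{1/2} ≤ e^{−min(m, γ−M) t} (‖Y_0‖² + ‖Z_0‖²)^{1/2}. -/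

import Mathlib

open scoped RealInnerProductSpace

lemma grad_inner_key (p : ℕ) (m M γ : ℝ) (hγ0 : 0 < γ)
    (f : EuclideanSpace ℝ (Fin p) → ℝ) (hf : ContDiff ℝ 2 f)
    (hHess : ∀ θ v : EuclideanSpace ℝ (Fin p),
      m * ‖v‖ ^ 2 ≤ iteratedFDeriv ℝ 2 f θ ![v, v] ∧
      iteratedFDeriv ℝ 2 f θ ![v, v] ≤ M * ‖v‖ ^ 2)
    (x y u w : EuclideanSpace ℝ (Fin p)) (huw : u - w = γ • (x - y)) :
    m * ‖u‖ ^ 2 - M * ‖w‖ ^ 2 ≤ γ * ⟪gradient f x - gradient f y, u + w⟫ := by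
  set c : ℝ → EuclideanSpace ℝ (Fin p) := fun s => y + s • (x - y) with hc
  set g : ℝ → ℝ := fun s => fderiv ℝ f (c s) (u + w) with hg
  have hfd : ContDiff ℝ 1 (fderiv ℝ f) := hf.fderiv_right (by norm_num)
  have hcd : ∀ s : ℝ, HasDerivAt c (x - y) s := by
    intro s
    exact ((hasDerivAt_const s y).add ((hasDerivAt_id s).smul_const (x - y))).congr_deriv (by simp)
  have hgd : ∀ s : ℝ, HasDerivAt g (fderiv ℝ (fderiv ℝ f) (c s) (x - y) (u + w)) s := by
    intro s
    have hA : HasDerivAt (fun s => fderiv ℝ f (c s))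
        (fderiv ℝ (fderiv ℝ f) (c s) (x - y)) s :=
      (hfd.differentiable (by norm_num) (c s)).hasFDerivAt.comp_hasDerivAt s (hcd s)
    simpa only [map_zero, add_zero] using hA.clm_apply (hasDerivAt_const s (u + w))
  have hbound : ∀ s : ℝ,
      m * ‖u‖ ^ 2 - M * ‖w‖ ^ 2 ≤ γ * fderiv ℝ (fderiv ℝ f) (c s) (x - y) (u + w) := by
    intro s
    have hsymm : ∀ v v' : EuclideanSpace ℝ (Fin p), fderiv ℝ (fderiv ℝ f) (c s) v v'
        = fderiv ℝ (fderiv ℝ f) (c s) v' v :=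
      fun v v' => ((hf.contDiffAt (x := c s)).isSymmSndFDerivAt (by norm_num)).eq v v'
    have h2 : ∀ v : EuclideanSpace ℝ (Fin p), fderiv ℝ (fderiv ℝ f) (c s) v v
        = iteratedFDeriv ℝ 2 f (c s) ![v, v] := by
      intro v; rw [iteratedFDeriv_two_apply]; simp
    have e1 : γ * fderiv ℝ (fderiv ℝ f) (c s) (x - y) (u + w)
        = fderiv ℝ (fderiv ℝ f) (c s) (u - w) (u + w) := by
      rw [huw]; simp
    rw [e1]
    have e2 : fderiv ℝ (fderiv ℝ f) (c s) (u - w) (u + w)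
        = fderiv ℝ (fderiv ℝ f) (c s) u u - fderiv ℝ (fderiv ℝ f) (c s) w w := by
      rw [map_sub]
      simp only [ContinuousLinearMap.sub_apply, map_add]
      rw [hsymm w u]
      ring
    rw [e2, h2, h2]
    have := (hHess (c s) u).1
    have := (hHess (c s) w).2
    linarith
  obtain ⟨s, hs, hslope⟩ := exists_hasDerivAt_eq_slope g
      (fun s => fderiv ℝ (fderiv ℝ f) (c s) (x - y) (u + w))
      (by norm_num : (0:ℝ) < 1)
      (fun s _ => (hgd s).continuousAt.continuousWithinAt)
      (fun s _ => hgd s)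
  have hginner : ∀ z : EuclideanSpace ℝ (Fin p), ⟪gradient f z, u + w⟫ = fderiv ℝ f z (u + w) := by
    intro z
    simp [gradient, InnerProductSpace.toDual_symm_apply]
  have hgval : ⟪gradient f x - gradient f y, u + w⟫ = g 1 - g 0 := by
    rw [inner_sub_left, hginner, hginner]
    simp [hg, hc]
  rw [hgval]
  have := hbound s
  rw [hslope] at this
  simp only [sub_zero, div_one] at this
  linarith

lemma hasDerivAt_norm_sq {p : ℕ} {u : ℝ → EuclideanSpace ℝ (Fin p)}
    {u' : EuclideanSpace ℝ (Fin p)} {t : ℝ} (hu : HasDerivAt u u' t) :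
    HasDerivAt (fun s => ‖u s‖ ^ 2) (2 * ⟪u', u t⟫) t := by
  have h := hu.inner ℝ hu
  have heq : (fun s => ⟪u s, u s⟫) = fun s => ‖u s‖ ^ 2 := by
    funext s; exact real_inner_self_eq_norm_sq (u s)
  rw [heq] at h
  refine h.congr_deriv ?_
  rw [real_inner_comm (u t) u']
  ring

lemma inner_identity {p : ℕ} (γ : ℝ) (y z g : EuclideanSpace ℝ (Fin p)) :
    2 * ⟪-(γ • g), y⟫ + 2 * ⟪-(γ • z) - γ • g, z⟫
      = -2 * (γ * ⟪g, y + z⟫) - 2 * γ * ‖z‖ ^ 2 := by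
  simp only [inner_neg_left, inner_sub_left, real_inner_smul_left, inner_add_right,
    real_inner_self_eq_norm_sq]
  ring

/-- Synchronous-coupling contraction for the kinetic Langevin diffusion.
Since the two solutions are driven by the same Brownian motion, the noise
cancels in the differences, so the difference process satisfies the ODEs
stated in the hypotheses `hL` and `hV` below. -/
theorem stmt_15 (p : ℕ) (m M γ : ℝ) (hm : 0 < m) (hmM : m ≤ M) (hγ : m + M ≤ γ)
    (f : EuclideanSpace ℝ (Fin p) → ℝ) (hf : ContDiff ℝ 2 f)
    (hHess : ∀ θ v : EuclideanSpace ℝ (Fin p),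
      m * ‖v‖ ^ 2 ≤ iteratedFDeriv ℝ 2 f θ ![v, v] ∧
      iteratedFDeriv ℝ 2 f θ ![v, v] ≤ M * ‖v‖ ^ 2)
    (L V L' V' : ℝ → EuclideanSpace ℝ (Fin p))
    (hL : ∀ t, HasDerivAt (fun s => L s - L' s) (V t - V' t) t)
    (hV : ∀ t, HasDerivAt (fun s => V s - V' s)
      (-(γ • (V t - V' t)) - γ • (gradient f (L t) - gradient f (L' t))) t) :
    (∀ t : ℝ, 0 ≤ t →
        deriv (fun s => ‖V s - V' s + γ • (L s - L' s)‖ ^ 2 + ‖V s - V' s‖ ^ 2) t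
          ≤ -2 * min m (γ - M)
              * (‖V t - V' t + γ • (L t - L' t)‖ ^ 2 + ‖V t - V' t‖ ^ 2)) ∧
    (∀ t : ℝ, 0 ≤ t →
        Real.sqrt (‖V t - V' t + γ • (L t - L' t)‖ ^ 2 + ‖V t - V' t‖ ^ 2)
          ≤ Real.exp (-(min m (γ - M)) * t)
              * Real.sqrt (‖V 0 - V' 0 + γ • (L 0 - L' 0)‖ ^ 2 + ‖V 0 - V' 0‖ ^ 2)) := by
  have hγ0 : 0 < γ := lt_of_lt_of_le (by linarith) hγ
  have hκm : min m (γ - M) ≤ m := min_le_left _ _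
  have hκM : min m (γ - M) ≤ γ - M := min_le_right _ _
  -- derivative of Y = Z + γ D
  have hYd : ∀ t, HasDerivAt (fun s => V s - V' s + γ • (L s - L' s))
      (-(γ • (gradient f (L t) - gradient f (L' t)))) t := by
    intro t
    have := (hV t).add ((hL t).const_smul γ)
    refine this.congr_deriv ?_
    module
  have hNd : ∀ t, HasDerivAt
      (fun s => ‖V s - V' s + γ • (L s - L' s)‖ ^ 2 + ‖V s - V' s‖ ^ 2)
      (2 * ⟪-(γ • (gradient f (L t) - gradient f (L' t))),
            V t - V' t + γ • (L t - L' t)⟫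
        + 2 * ⟪-(γ • (V t - V' t)) - γ • (gradient f (L t) - gradient f (L' t)),
            V t - V' t⟫) t :=
    fun t => (hasDerivAt_norm_sq (hYd t)).add (hasDerivAt_norm_sq (hV t))
  -- the differential inequality, for all t
  have hkey : ∀ t : ℝ,
      deriv (fun s => ‖V s - V' s + γ • (L s - L' s)‖ ^ 2 + ‖V s - V' s‖ ^ 2) t
        ≤ -2 * min m (γ - M)
            * (‖V t - V' t + γ • (L t - L' t)‖ ^ 2 + ‖V t - V' t‖ ^ 2) := by
    intro t
    rw [(hNd t).deriv]
    have hinner : m * ‖V t - V' t + γ • (L t - L' t)‖ ^ 2 - M * ‖V t - V' t‖ ^ 2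
        ≤ γ * ⟪gradient f (L t) - gradient f (L' t),
              (V t - V' t + γ • (L t - L' t)) + (V t - V' t)⟫ := by
      refine grad_inner_key p m M γ hγ0 f hf hHess (L t) (L' t)
        (V t - V' t + γ • (L t - L' t)) (V t - V' t) ?_
      module
    have hval : 2 * ⟪-(γ • (gradient f (L t) - gradient f (L' t))),
            V t - V' t + γ • (L t - L' t)⟫
        + 2 * ⟪-(γ • (V t - V' t)) - γ • (gradient f (L t) - gradient f (L' t)),
            V t - V' t⟫
        = -2 * (γ * ⟪gradient f (L t) - gradient f (L' t),
              (V t - V' t + γ • (L t - L' t)) + (V t - V' t)⟫)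
          - 2 * γ * ‖V t - V' t‖ ^ 2 := by
      exact inner_identity γ (V t - V' t + γ • (L t - L' t)) (V t - V' t)
        (gradient f (L t) - gradient f (L' t))
    rw [hval]
    have hz2 : (0:ℝ) ≤ ‖V t - V' t‖ ^ 2 := sq_nonneg _
    have hy2 : (0:ℝ) ≤ ‖V t - V' t + γ • (L t - L' t)‖ ^ 2 := sq_nonneg _
    nlinarith
  refine ⟨fun t _ => hkey t, fun t ht => ?_⟩
  -- Gronwall via monotonicity of s ↦ exp(2κs) * N s
  set κ := min m (γ - M) with hκdef
  set N : ℝ → ℝ := fun s => ‖V s - V' s + γ • (L s - L' s)‖ ^ 2 + ‖V s - V' s‖ ^ 2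
    with hNdef
  have hNt : ∀ s, N s = ‖V s - V' s + γ • (L s - L' s)‖ ^ 2 + ‖V s - V' s‖ ^ 2 :=
    fun s => rfl
  have hNnonneg : ∀ s, 0 ≤ N s := fun s => add_nonneg (sq_nonneg _) (sq_nonneg _)
  have hNd' : ∀ s, DifferentiableAt ℝ N s := fun s => (hNd s).differentiableAt
  have hkey' : ∀ s, deriv N s ≤ -2 * κ * N s := hkey
  have hhd : ∀ s : ℝ, HasDerivAt (fun r => Real.exp (2 * κ * r) * N r)
      (Real.exp (2 * κ * s) * (2 * κ) * N s + Real.exp (2 * κ * s) * deriv N s) s := by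
    intro s
    have he : HasDerivAt (fun r : ℝ => Real.exp (2 * κ * r))
        (Real.exp (2 * κ * s) * (2 * κ)) s := by
      simpa using ((hasDerivAt_id s).const_mul (2 * κ)).exp
    exact he.mul (hNd' s).hasDerivAt
  have hmono : Antitone (fun r => Real.exp (2 * κ * r) * N r) := by
    refine antitone_of_deriv_nonpos (fun s => (hhd s).differentiableAt) (fun s => ?_)
    rw [(hhd s).deriv]
    have h1 := hkey' s
    have hexp : 0 < Real.exp (2 * κ * s) := Real.exp_pos _
    nlinarith [hNnonneg s]
  have hle : Real.exp (2 * κ * t) * N t ≤ N 0 := by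
    have := hmono ht
    simpa using this
  have hNle : N t ≤ Real.exp (-(2 * κ * t)) * N 0 := by
    rw [Real.exp_neg, inv_mul_eq_div, le_div_iff₀ (Real.exp_pos _)]
    linarith [hle, mul_comm (N t) (Real.exp (2 * κ * t)),
      mul_comm (Real.exp (2 * κ * t)) (N t)]
  calc Real.sqrt (N t) ≤ Real.sqrt (Real.exp (-(2 * κ * t)) * N 0) :=
        Real.sqrt_le_sqrt hNle
    _ = Real.exp (-κ * t) * Real.sqrt (N 0) := by
        rw [Real.sqrt_mul (Real.exp_nonneg _)]
        congr 1
        rw [← Real.exp_half]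
        congr 1
        ring
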